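/- The extended nested exchangeable correlation matrix R is symmetric, and R is positive definite if and only if min{λ1, λ2, λ3, λ4} > 0, i.e., if and only if all four quantities λ1 = 1−α0, λ2 = 1+(L−1)α0−Lα1, λ3 = 1+(L−1)α0+L(K−1)α1−LKα2, and λ4 = 1+(L−1)α0+L(K−1)α1+LK(M−1)α2 are strictly positive. -/

import Mathlib

open Matrix Polynomial Finset

noncomputable section

/-- Extended nested exchangeable correlation matrix: the ((j,k,l),(j',k',l')) entry equals
1 if (j,k,l)=(j',k',l'), `a0` if j=j', k=k', l≠l', `a1` if j=j', k≠k', and `a2` if j≠j'. -/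
def Rmat (M K L : ℕ) (a0 a1 a2 : ℝ) :
    Matrix (Fin M × Fin K × Fin L) (Fin M × Fin K × Fin L) ℝ :=
  Matrix.of fun p q =>
    if p = q then 1
    else if p.1 = q.1 ∧ p.2.1 = q.2.1 then a0
    else if p.1 = q.1 then a1
    else a2

def lam1 (a0 : ℝ) : ℝ := 1 - a0

def lam2 (L : ℕ) (a0 a1 : ℝ) : ℝ := 1 + ((L : ℝ) - 1) * a0 - (L : ℝ) * a1

def lam3 (K L : ℕ) (a0 a1 a2 : ℝ) : ℝ :=
  1 + ((L : ℝ) - 1) * a0 + (L : ℝ) * ((K : ℝ) - 1) * a1 - (L : ℝ) * (K : ℝ) * a2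

def lam4 (M K L : ℕ) (a0 a1 a2 : ℝ) : ℝ :=
  1 + ((L : ℝ) - 1) * a0 + (L : ℝ) * ((K : ℝ) - 1) * a1
    + (L : ℝ) * (K : ℝ) * ((M : ℝ) - 1) * a2

namespace RmatAux

variable {M K L : ℕ}

lemma Rmat_apply (a0 a1 a2 : ℝ) (p q : Fin M × Fin K × Fin L) :
    Rmat M K L a0 a1 a2 p q =
      (1 - a0) * (if p = q then 1 else 0)
      + (a0 - a1) * (if p.1 = q.1 ∧ p.2.1 = q.2.1 then 1 else 0)
      + (a1 - a2) * (if p.1 = q.1 then 1 else 0) + a2 := by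
  obtain ⟨j, k, l⟩ := p
  obtain ⟨j', k', l'⟩ := q
  simp only [Rmat, Matrix.of_apply, Prod.mk.injEq]
  by_cases h1 : j = j'
  · by_cases h2 : k = k'
    · by_cases h3 : l = l'
      · simp [h1, h2, h3]
      · simp [h1, h2, h3]
    · simp [h1, h2]
  · simp [h1]

def S2 (x : Fin M × Fin K × Fin L → ℝ) (j : Fin M) (k : Fin K) : ℝ := ∑ l, x (j, k, l)
def S1 (x : Fin M × Fin K × Fin L → ℝ) (j : Fin M) : ℝ := ∑ k, ∑ l, x (j, k, l)
def S0 (x : Fin M × Fin K × Fin L → ℝ) : ℝ := ∑ j, ∑ k, ∑ l, x (j, k, l)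

lemma quadForm (a0 a1 a2 : ℝ) (x : Fin M × Fin K × Fin L → ℝ) :
    x ⬝ᵥ (Rmat M K L a0 a1 a2 *ᵥ x) =
      (1 - a0) * ∑ p, x p ^ 2 + (a0 - a1) * ∑ j, ∑ k, S2 x j k ^ 2
      + (a1 - a2) * ∑ j, S1 x j ^ 2 + a2 * S0 x ^ 2 := by
  have hmv : ∀ p, (Rmat M K L a0 a1 a2 *ᵥ x) p =
      (1 - a0) * x p + (a0 - a1) * S2 x p.1 p.2.1 + (a1 - a2) * S1 x p.1 + a2 * S0 x := by
    intro p
    simp only [mulVec, dotProduct, Rmat_apply]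
    rw [Fintype.sum_prod_type]
    simp only [Fintype.sum_prod_type]
    simp [Finset.mul_sum, Finset.sum_add_distrib, ite_and, Finset.sum_ite_eq,
      Finset.mul_sum, S2, S1, S0, mul_ite, mul_one, mul_zero, Finset.sum_ite_eq',
      add_mul, ← Finset.sum_mul]
    obtain ⟨j, k, l⟩ := p
    ring_nf
    simp [Prod.mk.injEq, ite_and, Finset.sum_ite_eq]
  simp only [dotProduct, hmv]
  rw [Fintype.sum_prod_type]
  simp only [Fintype.sum_prod_type, mul_add, Finset.sum_add_distrib]
  have e2 : ∀ (j : Fin M) (k : Fin K), ∑ l, x (j, k, l) * ((a0 - a1) * S2 x j k)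
      = (a0 - a1) * S2 x j k ^ 2 := by
    intro j k; rw [← Finset.sum_mul, ← S2]; ring
  have e1 : ∀ j : Fin M, ∑ k, ∑ l, x (j, k, l) * ((a1 - a2) * S1 x j)
      = (a1 - a2) * S1 x j ^ 2 := by
    intro j
    have : ∑ k, ∑ l, x (j, k, l) * ((a1 - a2) * S1 x j)
        = (∑ k, ∑ l, x (j, k, l)) * ((a1 - a2) * S1 x j) := by
      rw [Finset.sum_mul]
      exact Finset.sum_congr rfl fun k _ => (Finset.sum_mul ..).symm
    rw [this, ← S1]; ring
  have e0 : ∑ j, ∑ k, ∑ l, x (j, k, l) * (a2 * S0 x) = a2 * S0 x ^ 2 := by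
    have : ∑ j, ∑ k, ∑ l, x (j, k, l) * (a2 * S0 x)
        = (∑ j, ∑ k, ∑ l, x (j, k, l)) * (a2 * S0 x) := by
      rw [Finset.sum_mul]
      refine Finset.sum_congr rfl fun j _ => ?_
      rw [Finset.sum_mul]
      exact Finset.sum_congr rfl fun k _ => (Finset.sum_mul ..).symm
    rw [this, ← S0]; ring
  simp only [e2, e1]
  rw [e0]
  have eA : ∑ j : Fin M, ∑ k : Fin K, ∑ l : Fin L, x (j, k, l) * ((1 - a0) * x (j, k, l))
      = (1 - a0) * ∑ j : Fin M, ∑ k : Fin K, ∑ l : Fin L, x (j, k, l) ^ 2 := by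
    simp only [Finset.mul_sum]
    exact Finset.sum_congr rfl fun _ _ => Finset.sum_congr rfl fun _ _ =>
      Finset.sum_congr rfl fun _ _ => by ring
  have eB : ∑ j : Fin M, ∑ k : Fin K, (a0 - a1) * S2 x j k ^ 2
      = (a0 - a1) * ∑ j : Fin M, ∑ k : Fin K, S2 x j k ^ 2 := by
    simp only [Finset.mul_sum]
  have eC : ∑ j : Fin M, (a1 - a2) * S1 x j ^ 2 = (a1 - a2) * ∑ j : Fin M, S1 x j ^ 2 := by
    simp only [Finset.mul_sum]
  rw [eA, eB, eC]

lemma rmat_isSymm (a0 a1 a2 : ℝ) : (Rmat M K L a0 a1 a2).IsSymm := by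
  ext p q
  rw [Matrix.transpose_apply, Rmat_apply, Rmat_apply]
  simp only [eq_comm]

lemma lamForm (a0 a1 a2 : ℝ) (hM : (M : ℝ) ≠ 0) (hK : (K : ℝ) ≠ 0) (hL : (L : ℝ) ≠ 0)
    (A B C D : ℝ) :
    (1 - a0) * A + (a0 - a1) * B + (a1 - a2) * C + a2 * D
      = lam1 a0 * (A - B / L) + lam2 L a0 a1 * (B / L - C / (L * K))
        + lam3 K L a0 a1 a2 * (C / (L * K) - D / (L * K * M))
        + lam4 M K L a0 a1 a2 * (D / (L * K * M)) := by
  unfold lam1 lam2 lam3 lam4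
  field_simp
  ring

lemma B_le (x : Fin M × Fin K × Fin L → ℝ) :
    ∑ j, ∑ k, S2 x j k ^ 2 ≤ (L : ℝ) * ∑ p, x p ^ 2 := by
  rw [Fintype.sum_prod_type]
  simp only [Fintype.sum_prod_type, Finset.mul_sum]
  refine Finset.sum_le_sum fun j _ => Finset.sum_le_sum fun k _ => ?_
  have := sq_sum_le_card_mul_sum_sq (s := (Finset.univ : Finset (Fin L)))
    (f := fun l => x (j, k, l))
  simpa [S2, Finset.mul_sum] using this

lemma C_le (x : Fin M × Fin K × Fin L → ℝ) :
    ∑ j, S1 x j ^ 2 ≤ (K : ℝ) * ∑ j, ∑ k, S2 x j k ^ 2 := by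
  simp only [Finset.mul_sum]
  refine Finset.sum_le_sum fun j _ => ?_
  have := sq_sum_le_card_mul_sum_sq (s := (Finset.univ : Finset (Fin K)))
    (f := fun k => S2 x j k)
  simpa [S1, S2, Finset.mul_sum] using this

lemma D_le (x : Fin M × Fin K × Fin L → ℝ) :
    S0 x ^ 2 ≤ (M : ℝ) * ∑ j, S1 x j ^ 2 := by
  have := sq_sum_le_card_mul_sum_sq (s := (Finset.univ : Finset (Fin M)))
    (f := fun j => S1 x j)
  simpa [S0, S1, Finset.mul_sum] using this

/-- Evaluation of the quadratic form at a rank-one (tensor) test vector. -/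
lemma test (a0 a1 a2 : ℝ) (hPD : (Rmat M K L a0 a1 a2).PosDef)
    (f : Fin M → ℝ) (g : Fin K → ℝ) (h : Fin L → ℝ)
    (hne : (fun p : Fin M × Fin K × Fin L => f p.1 * g p.2.1 * h p.2.2) ≠ 0) :
    0 < (1 - a0) * ((∑ j, f j ^ 2) * (∑ k, g k ^ 2) * (∑ l, h l ^ 2))
      + (a0 - a1) * ((∑ j, f j ^ 2) * (∑ k, g k ^ 2) * (∑ l, h l) ^ 2)
      + (a1 - a2) * ((∑ j, f j ^ 2) * (∑ k, g k) ^ 2 * (∑ l, h l) ^ 2)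
      + a2 * ((∑ j, f j) * (∑ k, g k) * (∑ l, h l)) ^ 2 := by
  set w : Fin M × Fin K × Fin L → ℝ := fun p => f p.1 * g p.2.1 * h p.2.2 with hw
  have hs : star w = w := by funext p; simp
  have hpos := hPD.dotProduct_mulVec_pos hne
  rw [hs, quadForm] at hpos
  have triple : ∀ (F : Fin M → ℝ) (G : Fin K → ℝ) (H : Fin L → ℝ),
      ∑ j, ∑ k, ∑ l, F j * G k * H l = (∑ j, F j) * (∑ k, G k) * (∑ l, H l) := by
    intro F G H
    rw [Finset.sum_mul_sum, Finset.sum_mul]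
    simp_rw [Finset.sum_mul_sum]
  have hA : ∑ p, w p ^ 2 = (∑ j, f j ^ 2) * (∑ k, g k ^ 2) * (∑ l, h l ^ 2) := by
    rw [Fintype.sum_prod_type]
    simp only [Fintype.sum_prod_type, hw, mul_pow]
    exact triple _ _ _
  have hS2 : ∀ (j : Fin M) (k : Fin K), S2 w j k = f j * g k * ∑ l, h l := by
    intro j k; simp [S2, hw, Finset.mul_sum]
  have hB : ∑ j, ∑ k, S2 w j k ^ 2
      = (∑ j, f j ^ 2) * (∑ k, g k ^ 2) * (∑ l, h l) ^ 2 := by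
    simp only [hS2, mul_pow]
    rw [Finset.sum_mul_sum]
    rw [Finset.sum_mul]
    refine Finset.sum_congr rfl fun j _ => ?_
    rw [Finset.sum_mul]
  have hS1 : ∀ j : Fin M, S1 w j = f j * (∑ k, g k) * (∑ l, h l) := by
    intro j
    simp only [S1]
    have : ∀ k : Fin K, ∑ l, w (j, k, l) = f j * g k * ∑ l, h l := by
      intro k; simp [hw, Finset.mul_sum]
    simp only [this]
    rw [← Finset.sum_mul, ← Finset.mul_sum]
  have hC : ∑ j, S1 w j ^ 2 = (∑ j, f j ^ 2) * (∑ k, g k) ^ 2 * (∑ l, h l) ^ 2 := by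
    simp only [hS1, mul_pow]
    rw [Finset.sum_mul, Finset.sum_mul]
  have hD : S0 w = (∑ j, f j) * (∑ k, g k) * (∑ l, h l) := by
    simp only [S0, hw]
    exact triple f g h
  rw [hA, hB, hC, hD] at hpos
  exact hpos

lemma sum_ind {n : ℕ} (i0 : Fin n) : ∑ i, (if i = i0 then (1:ℝ) else 0) = 1 := by simp

lemma sum_ind_sq {n : ℕ} (i0 : Fin n) : ∑ i, (if i = i0 then (1:ℝ) else 0) ^ 2 = 1 := by
  have h : ∀ i : Fin n, (if i = i0 then (1:ℝ) else 0) ^ 2 = if i = i0 then 1 else 0 := by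
    intro i; split <;> norm_num
  simp [h]

lemma sum_d {n : ℕ} (i0 i1 : Fin n) :
    ∑ i, ((if i = i0 then (1:ℝ) else 0) - (if i = i1 then 1 else 0)) = 0 := by
  simp [Finset.sum_sub_distrib]

lemma sum_d_sq {n : ℕ} (i0 i1 : Fin n) (hne : i0 ≠ i1) :
    ∑ i, ((if i = i0 then (1:ℝ) else 0) - (if i = i1 then 1 else 0)) ^ 2 = 2 := by
  have h : ∀ i : Fin n, ((if i = i0 then (1:ℝ) else 0) - (if i = i1 then 1 else 0)) ^ 2
      = (if i = i0 then (1:ℝ) else 0) + (if i = i1 then 1 else 0) := by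
    intro i
    by_cases h0 : i = i0 <;> by_cases h1 : i = i1
    · exact absurd (h0 ▸ h1) hne
    · simp [h0, h1, hne]
    · simp [h0, h1, Ne.symm hne]
    · simp [h0, h1]
  rw [Finset.sum_congr rfl fun i _ => h i, Finset.sum_add_distrib, sum_ind, sum_ind]
  norm_num

lemma sum_one (n : ℕ) : ∑ _i : Fin n, (1:ℝ) = n := by simp

lemma sum_one_sq (n : ℕ) : ∑ _i : Fin n, (1:ℝ) ^ 2 = n := by simp

lemma key (c lam : ℝ) (hc : 0 < c) (h : 0 < c * lam) : 0 < lam := by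
  by_contra hl
  push_neg at hl
  nlinarith

end RmatAux

theorem Rmat_symm_posDef_iff (M K L : ℕ) (hM : 2 ≤ M) (hK : 2 ≤ K) (hL : 2 ≤ L)
    (a0 a1 a2 : ℝ) :
    (Rmat M K L a0 a1 a2).IsSymm ∧
    ((Rmat M K L a0 a1 a2).PosDef ↔
      0 < lam1 a0 ∧ 0 < lam2 L a0 a1 ∧ 0 < lam3 K L a0 a1 a2 ∧
        0 < lam4 M K L a0 a1 a2) := by
  have hsym := RmatAux.rmat_isSymm (M := M) (K := K) (L := L) a0 a1 a2
  have hMr : (0:ℝ) < (M:ℝ) := by exact_mod_cast Nat.lt_of_lt_of_le Nat.zero_lt_two hM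
  have hKr : (0:ℝ) < (K:ℝ) := by exact_mod_cast Nat.lt_of_lt_of_le Nat.zero_lt_two hK
  have hLr : (0:ℝ) < (L:ℝ) := by exact_mod_cast Nat.lt_of_lt_of_le Nat.zero_lt_two hL
  refine ⟨hsym, ?_, ?_⟩
  · -- PosDef → eigenvalues positive
    intro hPD
    set i0M : Fin M := ⟨0, by omega⟩ with hi0M
    set i1M : Fin M := ⟨1, by omega⟩ with hi1M
    set i0K : Fin K := ⟨0, by omega⟩ with hi0K
    set i1K : Fin K := ⟨1, by omega⟩ with hi1K
    set i0L : Fin L := ⟨0, by omega⟩ with hi0L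
    set i1L : Fin L := ⟨1, by omega⟩ with hi1L
    have hMne : i0M ≠ i1M := by simp [hi0M, hi1M, Fin.ext_iff]
    have hKne : i0K ≠ i1K := by simp [hi0K, hi1K, Fin.ext_iff]
    have hLne : i0L ≠ i1L := by simp [hi0L, hi1L, Fin.ext_iff]
    refine ⟨?_, ?_, ?_, ?_⟩
    · -- lam1
      have t := RmatAux.test a0 a1 a2 hPD
        (fun j => if j = i0M then 1 else 0) (fun k => if k = i0K then 1 else 0)
        (fun l => (if l = i0L then (1:ℝ) else 0) - (if l = i1L then 1 else 0)) ?_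
      · rw [RmatAux.sum_ind, RmatAux.sum_ind_sq, RmatAux.sum_ind, RmatAux.sum_ind_sq,
          RmatAux.sum_d, RmatAux.sum_d_sq _ _ hLne] at t
        unfold lam1
        nlinarith [t]
      · intro h0
        have := congrFun h0 (i0M, i0K, i0L)
        simp [hLne] at this
    · -- lam2
      have t := RmatAux.test a0 a1 a2 hPD
        (fun j => if j = i0M then 1 else 0)
        (fun k => (if k = i0K then (1:ℝ) else 0) - (if k = i1K then 1 else 0))
        (fun _l => (1:ℝ)) ?_
      · rw [RmatAux.sum_ind, RmatAux.sum_ind_sq, RmatAux.sum_d, RmatAux.sum_d_sq _ _ hKne,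
          RmatAux.sum_one, RmatAux.sum_one_sq] at t
        refine RmatAux.key (2 * (L:ℝ)) _ (by positivity) ?_
        unfold lam2
        nlinarith [t]
      · intro h0
        have := congrFun h0 (i0M, i0K, i0L)
        simp [hKne] at this
    · -- lam3
      have t := RmatAux.test a0 a1 a2 hPD
        (fun j => (if j = i0M then (1:ℝ) else 0) - (if j = i1M then 1 else 0))
        (fun _k => (1:ℝ)) (fun _l => (1:ℝ)) ?_
      · rw [RmatAux.sum_d, RmatAux.sum_d_sq _ _ hMne, RmatAux.sum_one, RmatAux.sum_one_sq,
          RmatAux.sum_one, RmatAux.sum_one_sq] at t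
        refine RmatAux.key (2 * (K:ℝ) * (L:ℝ)) _ (by positivity) ?_
        unfold lam3
        nlinarith [t]
      · intro h0
        have := congrFun h0 (i0M, i0K, i0L)
        simp [hMne] at this
    · -- lam4
      have t := RmatAux.test a0 a1 a2 hPD
        (fun _j => (1:ℝ)) (fun _k => (1:ℝ)) (fun _l => (1:ℝ)) ?_
      · rw [RmatAux.sum_one, RmatAux.sum_one_sq, RmatAux.sum_one, RmatAux.sum_one_sq,
          RmatAux.sum_one, RmatAux.sum_one_sq] at t
        refine RmatAux.key ((M:ℝ) * (K:ℝ) * (L:ℝ)) _ (by positivity) ?_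
        unfold lam4
        nlinarith [t]
      · intro h0
        have := congrFun h0 (i0M, i0K, i0L)
        simp at this
  · -- eigenvalues positive → PosDef
    rintro ⟨h1, h2, h3, h4⟩
    rw [Matrix.posDef_iff_dotProduct_mulVec]
    constructor
    · -- Hermitian
      ext p q
      rw [Matrix.conjTranspose_apply, star_trivial]
      have h := congrFun (congrFun hsym q) p
      rw [Matrix.transpose_apply] at h
      exact h.symm
    · intro x hx
      have hstar : star x = x := funext fun p => star_trivial _
      rw [hstar, RmatAux.quadForm, RmatAux.lamForm a0 a1 a2 hMr.ne' hKr.ne' hLr.ne']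
      set A := ∑ p, x p ^ 2 with hA
      set B := ∑ j, ∑ k, RmatAux.S2 x j k ^ 2 with hB
      set C := ∑ j, RmatAux.S1 x j ^ 2 with hC
      set D := RmatAux.S0 x ^ 2 with hD
      have hApos : 0 < A := by
        obtain ⟨p, hp⟩ := Function.ne_iff.mp hx
        have h1' : x p ^ 2 ≤ A :=
          Finset.single_le_sum (f := fun p => x p ^ 2) (fun i _ => sq_nonneg _)
            (Finset.mem_univ p)
        have h2' : 0 < x p ^ 2 :=
          lt_of_le_of_ne (sq_nonneg _) (Ne.symm (pow_ne_zero 2 hp))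
        linarith
      have hBle : B ≤ (L:ℝ) * A := RmatAux.B_le x
      have hCle : C ≤ (K:ℝ) * B := RmatAux.C_le x
      have hDle : D ≤ (M:ℝ) * C := RmatAux.D_le x
      have hDnn : 0 ≤ D := sq_nonneg _
      have ht1 : 0 ≤ A - B / L := by
        rw [sub_nonneg, div_le_iff₀ hLr]
        linarith
      have ht2 : 0 ≤ B / L - C / (L * K) := by
        have : B / L - C / (L * K) = ((K:ℝ) * B - C) / (L * K) := by
          field_simp
        rw [this]
        exact div_nonneg (by linarith) (by positivity)
      have ht3 : 0 ≤ C / (L * K) - D / (L * K * M) := by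
        have : C / (L * K) - D / (L * K * M) = ((M:ℝ) * C - D) / (L * K * M) := by
          field_simp
        rw [this]
        exact div_nonneg (by linarith) (by positivity)
      have ht4 : 0 ≤ D / (L * K * M) := by positivity
      have hsum : (A - B / L) + (B / L - C / (L * K)) + (C / (L * K) - D / (L * K * M))
          + D / (L * K * M) = A := by ring
      set m := min (min (lam1 a0) (lam2 L a0 a1))
        (min (lam3 K L a0 a1 a2) (lam4 M K L a0 a1 a2)) with hm
      have hmpos : 0 < m := by
        simp only [hm, lt_min_iff]
        exact ⟨⟨h1, h2⟩, h3, h4⟩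
      have hle : m * A ≤ lam1 a0 * (A - B / L) + lam2 L a0 a1 * (B / L - C / (L * K))
          + lam3 K L a0 a1 a2 * (C / (L * K) - D / (L * K * M))
          + lam4 M K L a0 a1 a2 * (D / (L * K * M)) := by
        have e : m * A = m * (A - B / L) + m * (B / L - C / (L * K))
            + m * (C / (L * K) - D / (L * K * M)) + m * (D / (L * K * M)) := by
          rw [← mul_add, ← mul_add, ← mul_add, hsum]
        have b1 : m ≤ lam1 a0 := le_trans (min_le_left _ _) (min_le_left _ _)
        have b2 : m ≤ lam2 L a0 a1 := le_trans (min_le_left _ _) (min_le_right _ _)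
        have b3 : m ≤ lam3 K L a0 a1 a2 := le_trans (min_le_right _ _) (min_le_left _ _)
        have b4 : m ≤ lam4 M K L a0 a1 a2 := le_trans (min_le_right _ _) (min_le_right _ _)
        rw [e]
        exact add_le_add (add_le_add (add_le_add
          (mul_le_mul_of_nonneg_right b1 ht1) (mul_le_mul_of_nonneg_right b2 ht2))
          (mul_le_mul_of_nonneg_right b3 ht3)) (mul_le_mul_of_nonneg_right b4 ht4)
      have : 0 < m * A := mul_pos hmpos hApos
      linarith
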